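/- Covariance matrix positivity/factorization: for τ > 0, λ > 0, let V₁ = (1/(2λ))(τ − sin(2τ√λ)/(2√λ)), V₂ = (1/2)(τ + sin(2τ√λ)/(2√λ)), and Cov = (1 − cos(2τ√λ))/(4λ) = sin²(τ√λ)/(2λ). Then V₁ > 0, and V₁V₂ − Cov² ≥ 0, so the symmetric matrix [[V₁, Cov],[Cov, V₂]] is positive semidefinite and admits a Cholesky-type factorization D Dᵀ with D = [[√V₁, 0],[Cov/√V₁, √((V₁V₂ − Cov²)/V₁)]]. -/

import Mathlib

open Matrix
theorem stmt_19 (τ lam : ℝ) (hτ : 0 < τ) (hlam : 0 < lam)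
    (V₁ V₂ Cov : ℝ)
    (hV₁ : V₁ = (1 / (2 * lam)) * (τ - Real.sin (2 * τ * Real.sqrt lam) / (2 * Real.sqrt lam)))
    (hV₂ : V₂ = (1 / 2) * (τ + Real.sin (2 * τ * Real.sqrt lam) / (2 * Real.sqrt lam)))
    (hCov : Cov = (1 - Real.cos (2 * τ * Real.sqrt lam)) / (4 * lam)) :
    Cov = Real.sin (τ * Real.sqrt lam) ^ 2 / (2 * lam) ∧
    0 < V₁ ∧
    0 ≤ V₁ * V₂ - Cov ^ 2 ∧
    (!![V₁, Cov; Cov, V₂] : Matrix (Fin 2) (Fin 2) ℝ) =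
      (!![Real.sqrt V₁, 0;
          Cov / Real.sqrt V₁, Real.sqrt ((V₁ * V₂ - Cov ^ 2) / V₁)]) *
      (!![Real.sqrt V₁, 0;
          Cov / Real.sqrt V₁, Real.sqrt ((V₁ * V₂ - Cov ^ 2) / V₁)])ᵀ := by
  have hs : 0 < Real.sqrt lam := Real.sqrt_pos.mpr hlam
  have hsq : Real.sqrt lam ^ 2 = lam := Real.sq_sqrt hlam.le
  set θ := τ * Real.sqrt lam with hθ
  have hθpos : 0 < θ := mul_pos hτ hs
  have h2θ : 2 * τ * Real.sqrt lam = 2 * θ := by ring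
  have hcos2 : Real.cos (2 * θ) = 1 - 2 * Real.sin θ ^ 2 := by
    rw [Real.cos_two_mul]
    nlinarith [Real.sin_sq_add_cos_sq θ]
  have hsin2 : Real.sin (2 * θ) = 2 * Real.sin θ * Real.cos θ := Real.sin_two_mul θ
  have hCov' : Cov = Real.sin θ ^ 2 / (2 * lam) := by
    rw [hCov, h2θ, hcos2]; ring
  have hV₁pos : 0 < V₁ := by
    have hlt : Real.sin (2 * θ) < 2 * θ := Real.sin_lt (by linarith)
    rw [hV₁, h2θ]
    have : τ - Real.sin (2 * θ) / (2 * Real.sqrt lam) > 0 := by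
      rw [gt_iff_lt, sub_pos, div_lt_iff₀ (by linarith)]
      calc Real.sin (2 * θ) < 2 * θ := hlt
        _ = τ * (2 * Real.sqrt lam) := by rw [hθ]; ring
    positivity
  have hΔeq : V₁ * V₂ - Cov ^ 2 = (θ ^ 2 - Real.sin θ ^ 2) / (4 * lam ^ 2) := by
    have hτeq : τ = θ / Real.sqrt lam := by field_simp [hθ]; exact hθ.symm
    have hc : Real.sin θ ^ 2 + Real.cos θ ^ 2 = 1 := Real.sin_sq_add_cos_sq θ
    rw [hV₁, hV₂, hCov', h2θ, hsin2, hτeq]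
    field_simp
    linear_combination (64*lam^3*τ^2*Real.sqrt lam^4 - 4*τ^2*Real.sqrt lam^2
      + 64*lam^4*Real.sin θ^2*Real.cos θ^2
      + (4 - 64*lam^3*(Real.sqrt lam^2 + lam))*Real.sin θ^2
      + (64*lam^3*(Real.sqrt lam^2 + lam) - 4)*Real.sin θ^4
      - 64*lam^3*τ^2*Real.sqrt lam^4 + 64*lam^3*Real.sqrt lam^2*Real.sin θ^2*Real.cos θ^2)*hsq
      + (64*lam^5*Real.sin θ^2 - 4*lam*Real.sin θ^2 - 64*lam^3*Real.sqrt lam^4*Real.sin θ^2)*hc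
  have hΔ : 0 ≤ V₁ * V₂ - Cov ^ 2 := by
    rw [hΔeq]
    have h1 : Real.sin θ ^ 2 ≤ θ ^ 2 := Real.sin_sq_le_sq
    apply div_nonneg (by linarith) (by positivity)
  refine ⟨hCov', hV₁pos, hΔ, ?_⟩
  have hsV₁ : Real.sqrt V₁ * Real.sqrt V₁ = V₁ := Real.mul_self_sqrt hV₁pos.le
  have hsV₁ne : Real.sqrt V₁ ≠ 0 := by positivity
  have hΔsq : Real.sqrt ((V₁ * V₂ - Cov ^ 2) / V₁) * Real.sqrt ((V₁ * V₂ - Cov ^ 2) / V₁)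
      = (V₁ * V₂ - Cov ^ 2) / V₁ := Real.mul_self_sqrt (by positivity)
  ext i j
  fin_cases i <;> fin_cases j <;>
    simp [Matrix.mul_apply, Fin.sum_univ_two, Matrix.vecHead, Matrix.vecTail, hsV₁]
  · field_simp
  · field_simp
  · rw [hΔsq]
    field_simp
    rw [Real.sq_sqrt hV₁pos.le]
    ring
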